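/- The Airy function Ai, defined as Ai(y) = (1/2π) ∫_ℝ exp(i(η³/3 + yη)) dη (as an improper/oscillatory integral), satisfies the Airy differential equation -v''(y) + y·v(y) = 0 for all real y. -/

import Mathlib

open MeasureTheory Filter Real Complex Topology

noncomputable def airyF (y : ℝ) (z : ℂ) : ℂ :=
  Complex.exp (Complex.I * (z ^ 3 / 3 + (y : ℂ) * z))

noncomputable def airyK (y u : ℝ) : ℂ := airyF y ((u : ℂ) + Complex.I)

lemma airyF_decomp (y s t : ℝ) :
    Complex.I * (((s:ℂ) + (t:ℂ) * Complex.I) ^ 3 / 3 + (y:ℂ) * ((s:ℂ) + (t:ℂ) * Complex.I))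
      = Complex.ofReal (-(s^2*t - t^3/3 + y*t))
        + Complex.ofReal (s^3/3 - s*t^2 + y*s) * Complex.I := by
  push_cast
  linear_combination ((s:ℂ)^2*(t:ℂ) + (s:ℂ)*(t:ℂ)^2*Complex.I
    + (t:ℂ)^3*(Complex.I^2-1)/3 + (y:ℂ)*(t:ℂ)) * Complex.I_sq

lemma airyF_norm (y s t : ℝ) :
    ‖airyF y ((s:ℂ) + (t:ℂ) * Complex.I)‖ = Real.exp (-(s^2*t - t^3/3 + y*t)) := by
  rw [airyF, airyF_decomp, Complex.norm_exp]
  simp [← Complex.ofReal_pow]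

lemma airyK_norm (y u : ℝ) :
    ‖airyK y u‖ = Real.exp (1/3 - y) * Real.exp (-u^2) := by
  have h := airyF_norm y u 1
  rw [show ((1:ℝ):ℂ) = 1 from Complex.ofReal_one, one_mul] at h
  rw [airyK, h, ← Real.exp_add]
  congr 1
  ring

lemma airyF_differentiable (y : ℝ) : Differentiable ℂ (airyF y) := by
  unfold airyF
  fun_prop

lemma airyK_continuous (y : ℝ) : Continuous (airyK y) := by
  exact (airyF_differentiable y).continuous.comp (by fun_prop)

lemma hP2 : Integrable (fun u : ℝ => (u^2+2) * Real.exp (-u^2)) := by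
  apply Integrable.mono' ((integrable_exp_neg_mul_sq (by norm_num : (0:ℝ) < 1/2)).const_mul 4)
  · exact (by fun_prop : Continuous fun u : ℝ => (u^2+2) * Real.exp (-u^2)).aestronglyMeasurable
  · refine Filter.Eventually.of_forall fun u => ?_
    have h1 : u^2/2 + 1 ≤ Real.exp (u^2/2) := by
      simpa [add_comm] using Real.add_one_le_exp (u^2/2)
    have h2 : (u^2+2) ≤ 4 * Real.exp (u^2/2) := by nlinarith [Real.exp_pos (u^2/2)]
    have h3 : Real.exp (u^2/2) * Real.exp (-u^2) = Real.exp (-(1/2*u^2)) := by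
      rw [← Real.exp_add]; ring_nf
    rw [Real.norm_eq_abs, _root_.abs_of_nonneg (by positivity)]
    calc (u^2+2) * Real.exp (-u^2) ≤ (4 * Real.exp (u^2/2)) * Real.exp (-u^2) := by
          exact mul_le_mul_of_nonneg_right h2 (Real.exp_pos _).le
      _ = 4 * Real.exp (-(1/2*u^2)) := by rw [mul_assoc, h3]
      _ = 4 * Real.exp (-(1/2)*u^2) := by ring_nf


lemma int_dom (y : ℝ) {h : ℝ → ℂ} {c : ℝ} (hc : Continuous h)
    (hb : ∀ u : ℝ, ‖h u‖ ≤ c * (u^2+2)) :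
    Integrable (fun u : ℝ => h u * airyK y u) := by
  apply Integrable.mono' (g := fun u => c * Real.exp (1/3 - y) * ((u^2+2) * Real.exp (-u^2)))
    (hP2.const_mul _)
  · exact (hc.mul (airyK_continuous y)).aestronglyMeasurable
  · refine Filter.Eventually.of_forall fun u => ?_
    rw [norm_mul, airyK_norm]
    have h1 : 0 ≤ c := by nlinarith [(norm_nonneg (h 0)).trans (hb 0)]
    calc ‖h u‖ * (Real.exp (1/3 - y) * Real.exp (-u^2))
        ≤ (c * (u^2+2)) * (Real.exp (1/3 - y) * Real.exp (-u^2)) := by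
          exact mul_le_mul_of_nonneg_right (hb u) (by positivity)
      _ = c * Real.exp (1/3 - y) * ((u^2+2) * Real.exp (-u^2)) := by ring

lemma norm_z_le (u : ℝ) : ‖(u:ℂ) + Complex.I‖ ≤ 1 * (u^2+2) := by
  have h := Complex.norm_le_abs_re_add_abs_im ((u:ℂ) + Complex.I)
  simp only [Complex.add_re, Complex.ofReal_re, Complex.I_re, add_zero, Complex.add_im,
    Complex.ofReal_im, Complex.I_im, zero_add] at h ⊢
  have : |u| ≤ u^2 + 1 := by nlinarith [_root_.sq_abs u, abs_nonneg u]
  simp only [abs_one] at h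
  nlinarith

lemma norm_z_sq (u : ℝ) : ‖((u:ℂ) + Complex.I)^2‖ ≤ 1 * (u^2+2) := by
  rw [norm_pow]
  have h : ‖(u:ℂ) + Complex.I‖^2 = u^2 + 1 := by
    rw [Complex.sq_norm, Complex.normSq_apply]
    simp
    ring
  rw [h]; nlinarith

lemma int_K (y : ℝ) : Integrable (airyK y) := by
  have := int_dom y (h := fun _ : ℝ => (1:ℂ)) (c := 1) continuous_const
    (fun u => by simp; nlinarith [sq_nonneg u])
  simpa using this

lemma int_zK (y : ℝ) :
    Integrable (fun u : ℝ => Complex.I * ((u:ℂ) + Complex.I) * airyK y u) :=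
  int_dom y (by fun_prop) (fun u => by
    rw [norm_mul, Complex.norm_I, one_mul]; exact norm_z_le u)

lemma int_z2K (y : ℝ) :
    Integrable (fun u : ℝ => ((u:ℂ) + Complex.I)^2 * airyK y u) :=
  int_dom y (by fun_prop) (fun u => norm_z_sq u)

lemma int_f' (y : ℝ) :
    Integrable (fun u : ℝ => Complex.I * (((u:ℂ) + Complex.I)^2 + (y:ℂ)) * airyK y u) := by
  refine int_dom y (c := 1 + |y|) (by fun_prop) (fun u => ?_)
  rw [norm_mul, Complex.norm_I, one_mul]
  calc ‖((u:ℂ) + Complex.I)^2 + (y:ℂ)‖ ≤ ‖((u:ℂ) + Complex.I)^2‖ + ‖(y:ℂ)‖ := norm_add_le _ _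
    _ ≤ 1 * (u^2+2) + |y| := by
        refine add_le_add (norm_z_sq u) ?_
        simp
    _ ≤ (1 + |y|) * (u^2+2) := by nlinarith [abs_nonneg y, sq_nonneg u]

lemma hasDerivAt_airyK (u y : ℝ) :
    HasDerivAt (fun y : ℝ => airyK y u)
      (Complex.I * ((u:ℂ) + Complex.I) * airyK y u) y := by
  set z : ℂ := (u:ℂ) + Complex.I with hz
  have h1 : HasDerivAt (fun w : ℂ => Complex.I * (z^3/3 + w*z)) (Complex.I * z) (y:ℝ) := by
    simpa using (((hasDerivAt_id ((y:ℝ):ℂ)).mul_const z).const_add (z^3/3)).const_mul Complex.I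
  have h2 := h1.cexp
  have h3 := h2.comp_ofReal
  convert h3 using 1
  · rfl
  rw [airyK, airyF, ← hz]
  ring

lemma hasDerivAt_airyK_u (y u : ℝ) :
    HasDerivAt (fun u : ℝ => airyK y u)
      (Complex.I * (((u:ℂ) + Complex.I)^2 + (y:ℂ)) * airyK y u) u := by
  have h0 : HasDerivAt (fun w : ℂ => w + Complex.I) 1 (u:ℂ) := (hasDerivAt_id _).add_const _
  have h1 : HasDerivAt (fun w : ℂ => (w + Complex.I)^3 / 3) (((u:ℂ) + Complex.I)^2) (u:ℂ) := by
    simpa using (h0.pow 3).div_const 3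
  have h2 : HasDerivAt (fun w : ℂ => (y:ℂ) * (w + Complex.I)) (y:ℂ) (u:ℂ) := by
    simpa using h0.const_mul (y:ℂ)
  have h3 := ((h1.add h2).const_mul Complex.I).cexp
  have h4 := h3.comp_ofReal
  convert h4 using 1
  · rfl
  rw [airyK, airyF]; simp only [Pi.add_apply]
  ring


lemma contour (y R : ℝ) :
    (∫ x in (-R)..R, Complex.exp (Complex.I * ((x : ℂ) ^ 3 / 3 + (y : ℂ) * x)))
      = (∫ x in (-R)..R, airyK y x)
        - Complex.I • (∫ t in (0:ℝ)..1, airyF y (((R:ℝ):ℂ) + (t:ℂ) * Complex.I))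
        + Complex.I • (∫ t in (0:ℝ)..1, airyF y (((-R:ℝ):ℂ) + (t:ℂ) * Complex.I)) := by
  have H := Complex.integral_boundary_rect_eq_zero_of_differentiableOn (airyF y)
    ((-R:ℝ):ℂ) (((R:ℝ):ℂ) + Complex.I) ((airyF_differentiable y).differentiableOn)
  simp only [Complex.add_re, Complex.ofReal_re, Complex.I_re, add_zero, Complex.add_im,
    Complex.ofReal_im, Complex.I_im, zero_add, Complex.ofReal_zero, zero_mul,
    Complex.ofReal_one, one_mul, smul_eq_mul, airyF] at H
  simp only [airyK, airyF, smul_eq_mul]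
  push_cast at H ⊢
  linear_combination H

lemma vert_decay (y : ℝ) (e : ℝ → ℝ) (he : ∀ R, (e R)^2 = R^2) :
    Tendsto (fun R : ℝ => ∫ t in (0:ℝ)..1, airyF y (((e R):ℂ) + (t:ℂ) * Complex.I))
      atTop (𝓝 0) := by
  apply squeeze_zero_norm' (a := fun R : ℝ => (R^2 - (1/3 + |y|))⁻¹)
  · filter_upwards [eventually_ge_atTop (max 1 (2 + |y|))] with R hR
    have hR1 : (1:ℝ) ≤ R := le_trans (le_max_left _ _) hR
    have hR2 : 2 + |y| ≤ R := le_trans (le_max_right _ _) hR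
    set a : ℝ := R^2 - (1/3 + |y|) with ha
    have ha1 : 1 ≤ a := by rw [ha]; nlinarith [abs_nonneg y, mul_nonneg (sub_nonneg.2 hR1) (by linarith : (0:ℝ) ≤ R)]
    have ha0 : 0 < a := lt_of_lt_of_le one_pos ha1
    have hbd : ‖∫ t in (0:ℝ)..1, airyF y (((e R):ℂ) + (t:ℂ) * Complex.I)‖
        ≤ |∫ t in (0:ℝ)..1, Real.exp (-(a * t))| := by
      apply intervalIntegral.norm_integral_le_abs_of_norm_le
      · filter_upwards [MeasureTheory.ae_restrict_mem measurableSet_uIoc] with t ht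
        rw [Set.uIoc_of_le (by norm_num : (0:ℝ) ≤ 1)] at ht
        obtain ⟨ht0, ht1⟩ := ht
        rw [airyF_norm, he]
        apply Real.exp_le_exp.2
        have ht2 : t^2 ≤ 1 := by nlinarith
        have ht3 : t^3 ≤ t := by nlinarith
        have := neg_abs_le y
        nlinarith
      · exact (by fun_prop : Continuous fun t : ℝ => Real.exp (-(a*t))).intervalIntegrable 0 1
    have hcomp : ∫ t in (0:ℝ)..1, Real.exp (-(a * t)) = (1 - Real.exp (-a)) / a := by
      have h1 := intervalIntegral.integral_comp_mul_left (f := fun t : ℝ => Real.exp (-t))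
        (a := (0:ℝ)) (b := 1) (ne_of_gt ha0)
      rw [mul_zero, mul_one] at h1
      rw [h1]
      have h2 := intervalIntegral.integral_comp_neg (f := fun t : ℝ => Real.exp t)
        (a := (0:ℝ)) (b := a)
      rw [h2, neg_zero, integral_exp, Real.exp_zero, smul_eq_mul]
      ring
    refine le_trans hbd ?_
    have hex : Real.exp (-a) ≤ 1 := Real.exp_le_one_iff.2 (by linarith)
    rw [hcomp, abs_div, abs_of_pos ha0, _root_.abs_of_nonneg (by linarith)]
    rw [div_eq_mul_inv]
    calc (1 - Real.exp (-a)) * a⁻¹ ≤ 1 * a⁻¹ :=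
          mul_le_mul_of_nonneg_right (by nlinarith [Real.exp_pos (-a)]) (inv_nonneg.2 ha0.le)
      _ = a⁻¹ := one_mul _
  · have h1 : Tendsto (fun R : ℝ => R^2 + -(1/3 + |y|)) atTop atTop :=
      tendsto_atTop_add_const_right _ _ (tendsto_pow_atTop two_ne_zero)
    have := h1.inv_tendsto_atTop
    simpa [sub_eq_add_neg, Pi.inv_def] using this


lemma key_tendsto (y : ℝ) :
    Tendsto (fun R : ℝ => ∫ η in (-R)..R,
        Complex.exp (Complex.I * ((η : ℂ) ^ 3 / 3 + (y : ℂ) * η)))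
      atTop (nhds (∫ u : ℝ, airyK y u)) := by
  have hh : Tendsto (fun R : ℝ => ∫ x in (-R)..R, airyK y x) atTop
      (nhds (∫ u : ℝ, airyK y u)) :=
    intervalIntegral_tendsto_integral (int_K y) tendsto_neg_atTop_atBot tendsto_id
  have hv1 := vert_decay y (fun R => R) (fun R => rfl)
  have hv2 := vert_decay y (fun R => -R) (fun R => by ring)
  have hT := (hh.sub (hv1.const_smul Complex.I)).add (hv2.const_smul Complex.I)
  rw [smul_zero, sub_zero, add_zero] at hT
  exact hT.congr (fun R => (contour y R).symm)

lemma bound_est (y x u : ℝ) (hx : |x - y| < 1) (w : ℂ) (hw : ‖w‖ ≤ u^2+2) :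
    ‖w * airyK x u‖ ≤ Real.exp (4/3 - y) * ((u^2+2) * Real.exp (-u^2)) := by
  rw [norm_mul, airyK_norm]
  have hx' := (abs_lt.1 hx).1
  have h1 : Real.exp (1/3 - x) ≤ Real.exp (4/3 - y) := Real.exp_le_exp.2 (by linarith)
  have h2 : ‖w‖ * (Real.exp (1/3 - x) * Real.exp (-u^2))
      ≤ (u^2+2) * (Real.exp (4/3 - y) * Real.exp (-u^2)) := by
    apply mul_le_mul hw (mul_le_mul_of_nonneg_right h1 (Real.exp_pos _).le)
      (by positivity) (by positivity)
  calc ‖w‖ * (Real.exp (1/3 - x) * Real.exp (-u^2))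
      ≤ (u^2+2) * (Real.exp (4/3 - y) * Real.exp (-u^2)) := h2
    _ = Real.exp (4/3 - y) * ((u^2+2) * Real.exp (-u^2)) := by ring

lemma hasDeriv_g1 (y : ℝ) :
    HasDerivAt (fun t : ℝ => ∫ u : ℝ, airyK t u)
      (∫ u : ℝ, Complex.I * ((u:ℂ) + Complex.I) * airyK y u) y := by
  have H := hasDerivAt_integral_of_dominated_loc_of_deriv_le (μ := volume) (x₀ := y) (s := Metric.ball y 1)
    (F := fun t (u : ℝ) => airyK t u)
    (F' := fun t (u : ℝ) => Complex.I * ((u:ℂ) + Complex.I) * airyK t u)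
    (bound := fun u : ℝ => Real.exp (4/3 - y) * ((u^2+2) * Real.exp (-u^2)))
    (Metric.ball_mem_nhds y one_pos)
    (Filter.Eventually.of_forall fun t => (airyK_continuous t).aestronglyMeasurable)
    (int_K y)
    (((continuous_const.mul (by fun_prop : Continuous fun u : ℝ => (u:ℂ) + Complex.I)).mul
      (airyK_continuous y)).aestronglyMeasurable)
    (Filter.Eventually.of_forall fun u => ?_)
    (hP2.const_mul _)
    (Filter.Eventually.of_forall fun u => ?_)
  · exact H.2
  · intro x hx
    rw [Metric.mem_ball, Real.dist_eq] at hx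
    have hw : ‖Complex.I * ((u:ℂ) + Complex.I)‖ ≤ u^2 + 2 := by
      rw [norm_mul, Complex.norm_I, one_mul]
      simpa using norm_z_le u
    exact bound_est y x u hx _ hw
  · intro x _
    exact hasDerivAt_airyK u x

lemma hasDeriv_g2 (y : ℝ) :
    HasDerivAt (fun t : ℝ => ∫ u : ℝ, Complex.I * ((u:ℂ) + Complex.I) * airyK t u)
      (∫ u : ℝ, (Complex.I * ((u:ℂ) + Complex.I))^2 * airyK y u) y := by
  have H := hasDerivAt_integral_of_dominated_loc_of_deriv_le (μ := volume) (x₀ := y) (s := Metric.ball y 1)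
    (F := fun t (u : ℝ) => Complex.I * ((u:ℂ) + Complex.I) * airyK t u)
    (F' := fun t (u : ℝ) => (Complex.I * ((u:ℂ) + Complex.I))^2 * airyK t u)
    (bound := fun u : ℝ => Real.exp (4/3 - y) * ((u^2+2) * Real.exp (-u^2)))
    (Metric.ball_mem_nhds y one_pos)
    (Filter.Eventually.of_forall fun t =>
      ((continuous_const.mul (by fun_prop : Continuous fun u : ℝ => (u:ℂ) + Complex.I)).mul
        (airyK_continuous t)).aestronglyMeasurable)
    (int_zK y)
    (((continuous_const.mul (by fun_prop : Continuous fun u : ℝ => (u:ℂ) + Complex.I)).pow 2).mul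
      (airyK_continuous y)).aestronglyMeasurable
    (Filter.Eventually.of_forall fun u => ?_)
    (hP2.const_mul _)
    (Filter.Eventually.of_forall fun u => ?_)
  · exact H.2
  · intro x hx
    rw [Metric.mem_ball, Real.dist_eq] at hx
    have hw : ‖(Complex.I * ((u:ℂ) + Complex.I))^2‖ ≤ u^2 + 2 := by
      rw [mul_pow, norm_mul, norm_pow, Complex.norm_I, one_pow, one_mul]
      simpa using norm_z_sq u
    exact bound_est y x u hx _ hw
  · intro x _
    have h := (hasDerivAt_airyK u x).const_mul (Complex.I * ((u:ℂ) + Complex.I))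
    convert h using 1
    · rfl
    ring

lemma ibp (y : ℝ) :
    (∫ u : ℝ, (((u:ℂ) + Complex.I)^2 + (y:ℂ)) * airyK y u) = 0 := by
  have h0 := integral_eq_zero_of_hasDerivAt_of_integrable
    (f := fun u : ℝ => airyK y u)
    (f' := fun u : ℝ => Complex.I * (((u:ℂ) + Complex.I)^2 + (y:ℂ)) * airyK y u)
    (fun u => hasDerivAt_airyK_u y u) (int_f' y) (int_K y)
  have h2 : (fun u : ℝ => (((u:ℂ) + Complex.I)^2 + (y:ℂ)) * airyK y u)
      = fun u : ℝ => (-Complex.I) * (Complex.I * (((u:ℂ) + Complex.I)^2 + (y:ℂ)) * airyK y u) :=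
    funext fun u => by
      linear_combination ((((u:ℂ) + Complex.I)^2 + (y:ℂ)) * airyK y u) * Complex.I_sq
  rw [h2, MeasureTheory.integral_const_mul, h0, mul_zero]

/-- The Airy function `Ai`, defined pointwise as the oscillatory integral
`Ai(y) = (1/2π) ∫_ℝ exp(i(η³/3 + yη)) dη` (limit of integrals over `[-R,R]`),
satisfies `-Ai''(y) + y·Ai(y) = 0` for all real `y`. -/
theorem airy_ode (Ai : ℝ → ℂ)
    (hAi : ∀ y : ℝ, Tendsto
      (fun R : ℝ => (1 / (2 * (π : ℂ))) *
        ∫ η in (-R)..R, Complex.exp (Complex.I * ((η : ℂ) ^ 3 / 3 + (y : ℂ) * η)))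
      atTop (nhds (Ai y))) :
    ∀ y : ℝ, -(deriv (deriv Ai) y) + (y : ℂ) * Ai y = 0 := by
  intro y
  have hAg : ∀ t : ℝ, Ai t = (1 / (2 * (π : ℂ))) * ∫ u : ℝ, airyK t u := fun t =>
    tendsto_nhds_unique (hAi t) ((key_tendsto t).const_mul _)
  have hAi_eq : Ai = fun t : ℝ => (1 / (2 * (π : ℂ))) * ∫ u : ℝ, airyK t u := funext hAg
  have hD1 : deriv Ai = fun t : ℝ =>
      (1 / (2 * (π : ℂ))) * ∫ u : ℝ, Complex.I * ((u:ℂ) + Complex.I) * airyK t u := by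
    rw [hAi_eq]
    exact funext fun t => ((hasDeriv_g1 t).const_mul _).deriv
  have hD2 : deriv (deriv Ai) y
      = (1 / (2 * (π : ℂ))) * ∫ u : ℝ, (Complex.I * ((u:ℂ) + Complex.I))^2 * airyK y u := by
    rw [hD1]
    exact ((hasDeriv_g2 y).const_mul _).deriv
  rw [hD2, hAg y]
  have e1 : (∫ u : ℝ, (Complex.I * ((u:ℂ) + Complex.I))^2 * airyK y u)
      = - ∫ u : ℝ, ((u:ℂ) + Complex.I)^2 * airyK y u := by
    rw [← MeasureTheory.integral_neg]
    congr 1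
    funext u
    linear_combination (((u:ℂ) + Complex.I)^2 * airyK y u) * Complex.I_sq
  have e2 : (∫ u : ℝ, ((u:ℂ) + Complex.I)^2 * airyK y u)
        + (y:ℂ) * (∫ u : ℝ, airyK y u)
      = ∫ u : ℝ, (((u:ℂ) + Complex.I)^2 + (y:ℂ)) * airyK y u := by
    rw [← MeasureTheory.integral_const_mul,
      ← MeasureTheory.integral_add (int_z2K y) (((int_K y).const_mul ((y:ℂ))))]
    congr 1
    funext u
    ring
  have e3 : (∫ u : ℝ, ((u:ℂ) + Complex.I)^2 * airyK y u)
      + (y:ℂ) * (∫ u : ℝ, airyK y u) = 0 := e2.trans (ibp y)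
  rw [e1]
  linear_combination (1 / (2 * (π:ℂ))) * e3
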